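/- If 0 < A ≤ M/2 − c√M (for the constant c as above), then φ_A(M) = ((M−2A+1)/(M−A+1))·C(M,A) ≥ (1/M)·(M/A)^A, and consequently φ_A(M) ≥ 2^A whenever (M/(2A))^A ≥ M. -/

import Mathlib

/-- Auxiliary: `(M/A)^A ≤ C(M,A)` for `0 < A ≤ M`. -/
lemma aux_pow_div_le_choose : ∀ (A M : ℕ), 0 < A → A ≤ M →
    ((M : ℝ) / A) ^ A ≤ (M.choose A : ℝ) := by
  intro A
  induction A with
  | zero => intro M h; omega
  | succ A ih =>
    intro M hpos hAM
    rcases Nat.eq_zero_or_pos A with rfl | hA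
    · simp
    · obtain ⟨m, rfl⟩ : ∃ m, M = m + 1 := ⟨M - 1, by omega⟩
      have hAm : A ≤ m := by omega
      have key : ((m + 1).choose (A + 1) : ℝ) * (A + 1) = (m + 1) * (m.choose A) := by
        exact_mod_cast congrArg (Nat.cast : ℕ → ℝ) (Nat.add_one_mul_choose_eq m A).symm
      have hA1 : (0 : ℝ) < (A : ℝ) + 1 := by positivity
      have hApos : (0 : ℝ) < (A : ℝ) := by exact_mod_cast hA
      have hchoose : ((m + 1).choose (A + 1) : ℝ) = ((m : ℝ) + 1) / (A + 1) * (m.choose A) := by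
        field_simp
        linarith [key]
      have hstep : ((m : ℝ) + 1) / ((A : ℝ) + 1) ≤ (m : ℝ) / A := by
        rw [div_le_div_iff₀ hA1 hApos]
        have : (A : ℝ) ≤ (m : ℝ) := by exact_mod_cast hAm
        nlinarith
      have hnn : (0 : ℝ) ≤ ((m : ℝ) + 1) / ((A : ℝ) + 1) := by positivity
      have goal_eq : ((((m + 1 : ℕ)) : ℝ) / (((A + 1 : ℕ)) : ℝ)) ^ (A + 1) =
          ((m : ℝ) + 1) / ((A : ℝ) + 1) * (((m : ℝ) + 1) / ((A : ℝ) + 1)) ^ A := by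
        push_cast; rw [pow_succ]; ring
      rw [goal_eq, hchoose]
      refine mul_le_mul_of_nonneg_left ?_ hnn
      calc (((m : ℝ) + 1) / ((A : ℝ) + 1)) ^ A ≤ ((m : ℝ) / A) ^ A :=
            pow_le_pow_left₀ hnn hstep A
        _ ≤ (m.choose A : ℝ) := ih m hA hAm

/-- there is an absolute constant c > 0 (the one from the
    minimization of φ_B) such that if 0 < A ≤ M/2 − c·√M, then
    φ_A(M) = ((M−2A+1)/(M−A+1))·C(M,A) ≥ (1/M)·(M/A)^A, and consequently
    φ_A(M) ≥ 2^A whenever (M/(2A))^A ≥ M. -/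
theorem stmt3 :
    ∃ c : ℝ, 0 < c ∧
      ∀ M A : ℕ, 0 < A → (A : ℝ) ≤ (M : ℝ) / 2 - c * Real.sqrt M →
        ((M.choose A : ℝ) - (M.choose (A - 1) : ℝ) =
            (((M : ℝ) - 2 * A + 1) / ((M : ℝ) - A + 1)) * (M.choose A : ℝ)) ∧
        (1 / (M : ℝ)) * ((M : ℝ) / A) ^ A ≤
            (((M : ℝ) - 2 * A + 1) / ((M : ℝ) - A + 1)) * (M.choose A : ℝ) ∧
        (((M : ℝ) / (2 * A)) ^ A ≥ (M : ℝ) →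
          (2 : ℝ) ^ A ≤
            (((M : ℝ) - 2 * A + 1) / ((M : ℝ) - A + 1)) * (M.choose A : ℝ)) := by
  refine ⟨1, one_pos, fun M A hA hle => ?_⟩
  have hsqrt : (0 : ℝ) ≤ Real.sqrt M := Real.sqrt_nonneg _
  have hAr : (1 : ℝ) ≤ (A : ℝ) := by exact_mod_cast hA
  have h2A : 2 * A ≤ M := by
    have : 2 * (A : ℝ) ≤ (M : ℝ) := by nlinarith
    exact_mod_cast this
  have hAM : A ≤ M := by omega
  have hMpos : 0 < M := by omega
  have hMr : (1 : ℝ) ≤ (M : ℝ) := by exact_mod_cast hMpos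
  have hdpos : (0 : ℝ) < (M : ℝ) - A + 1 := by
    have : (A : ℝ) ≤ (M : ℝ) := by exact_mod_cast hAM
    linarith
  have hnpos : (0 : ℝ) < (M : ℝ) - 2 * A + 1 := by
    have : 2 * (A : ℝ) ≤ (M : ℝ) := by exact_mod_cast h2A
    linarith
  -- the key binomial identity
  obtain ⟨a, rfl⟩ : ∃ a, A = a + 1 := ⟨A - 1, by omega⟩
  have hid : (M.choose (a + 1) : ℝ) * ((a : ℝ) + 1) = (M.choose a : ℝ) * ((M : ℝ) - a) := by
    have h := Nat.choose_succ_right_eq M a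
    have hsub : ((M - a : ℕ) : ℝ) = (M : ℝ) - a := by
      have : a ≤ M := by omega
      push_cast [this]; ring
    have := congrArg (Nat.cast : ℕ → ℝ) h
    push_cast at this
    rw [← hsub]
    exact_mod_cast this
  have hprev : (M.choose ((a + 1) - 1) : ℝ) = (M.choose a : ℝ) := by norm_num
  have part1 : (M.choose (a + 1) : ℝ) - (M.choose ((a + 1) - 1) : ℝ) =
      (((M : ℝ) - 2 * (a + 1 : ℕ) + 1) / ((M : ℝ) - (a + 1 : ℕ) + 1)) * (M.choose (a + 1) : ℝ) := by
    rw [hprev]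
    have hd : ((M : ℝ) - (a + 1 : ℕ) + 1) = (M : ℝ) - a := by push_cast; ring
    rw [hd]
    have hMa : (0 : ℝ) < (M : ℝ) - a := by
      have : ((M : ℝ) - ((a : ℝ) + 1) + 1) = (M : ℝ) - a := by ring
      rw [← this]; push_cast at hdpos ⊢; linarith
    have hprev' : (M.choose a : ℝ) = (M.choose (a + 1) : ℝ) * ((a : ℝ) + 1) / ((M : ℝ) - a) := by
      field_simp
      linarith [hid]
    rw [hprev']
    field_simp
    push_cast
    ring
  -- ratio ≥ 1/M
  have hratio : 1 / (M : ℝ) ≤ ((M : ℝ) - 2 * (a + 1 : ℕ) + 1) / ((M : ℝ) - (a + 1 : ℕ) + 1) := by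
    rw [div_le_div_iff₀ (by positivity) hdpos]
    have h2 : 2 * ((a : ℝ) + 1) ≤ (M : ℝ) := by exact_mod_cast h2A
    push_cast
    nlinarith
  have hchoose_ge : ((M : ℝ) / (a + 1 : ℕ)) ^ (a + 1) ≤ (M.choose (a + 1) : ℝ) :=
    aux_pow_div_le_choose (a + 1) M hA hAM
  have hpow_nonneg : (0 : ℝ) ≤ ((M : ℝ) / (a + 1 : ℕ)) ^ (a + 1) := by positivity
  have part2 : (1 / (M : ℝ)) * ((M : ℝ) / (a + 1 : ℕ)) ^ (a + 1) ≤
      (((M : ℝ) - 2 * (a + 1 : ℕ) + 1) / ((M : ℝ) - (a + 1 : ℕ) + 1)) * (M.choose (a + 1) : ℝ) :=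
    mul_le_mul hratio hchoose_ge hpow_nonneg (le_of_lt (div_pos hnpos hdpos))
  refine ⟨part1, part2, fun hyp => ?_⟩
  -- part 3
  have hsplit : ((M : ℝ) / (a + 1 : ℕ)) ^ (a + 1) =
      2 ^ (a + 1) * ((M : ℝ) / (2 * (a + 1 : ℕ))) ^ (a + 1) := by
    rw [← mul_pow]
    congr 1
    have : ((a : ℝ) + 1) ≠ 0 := by positivity
    push_cast
    field_simp
  have h3 : (2 : ℝ) ^ (a + 1) ≤ (1 / (M : ℝ)) * ((M : ℝ) / (a + 1 : ℕ)) ^ (a + 1) := by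
    rw [hsplit]
    calc (2 : ℝ) ^ (a + 1) = (1 / (M : ℝ)) * (2 ^ (a + 1) * (M : ℝ)) := by
          field_simp
      _ ≤ (1 / (M : ℝ)) * (2 ^ (a + 1) * ((M : ℝ) / (2 * (a + 1 : ℕ))) ^ (a + 1)) := by
          gcongr
  linarith [part2, h3]
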